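/- Let R be a commutative ring, n ≥ 4, k ≥ 1, and let x₁, …, x_k be N×N matrices over R indexed by ∧²[n], each satisfying the exterior-number conditions with witness θ_{x_h}. Then for every H ∈ ∧⁴[n] and all disjoint A, C ∈ ∧²[n]: a_{A,C}^H(x₁·x₂·⋯·x_k) = sign(A,C) · Σ_{I₁,…,I_{k−1} ∈ ∧⁴[n]} θ_{x_k}(I₁, H)·θ_{x_{k−1}}(I₂, I₁)·⋯·θ_{x₂}(I_{k−1}, I_{k−2})·θ_{x₁}(A∪C, I_{k−1}). -/

import Mathlib

open Finset MvPolynomial Matrix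
open Fin.NatCast

/-- `V n` is the set `∧²[n]` of 2-element subsets of `[n] = {1, …, n}`
(modelled on `Fin n`). -/
abbrev V (n : ℕ) := {I : Finset (Fin n) // I.card = 2}

/-- The variable `x_S` of the polynomial ring `R[x_I : I ∈ ∧²[n]]`
(interpreted as `0` if `S` is not a 2-element set, a case which never occurs below). -/
noncomputable def var2 (R : Type*) [CommRing R] (n : ℕ) (S : Finset (Fin n)) :
    MvPolynomial (V n) R :=
  if h : S.card = 2 then MvPolynomial.X ⟨S, h⟩ else 0

/-- The Plücker polynomial `f_{i,J} = Σ_{h=1}^{3} (−1)^h x_{{i,j_h}} x_{J∖{j_h}}`,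
where `J = {j₁ < j₂ < j₃}`; the exponent `h` is recovered as the number of elements
of `J` that are `≤ j_h`. -/
noncomputable def pluckerPoly (R : Type*) [CommRing R] (n : ℕ) (i : Fin n)
    (J : Finset (Fin n)) : MvPolynomial (V n) R :=
  ∑ j ∈ J, ((-1 : ℤ) ^ (J.filter (fun a => a ≤ j)).card) •
    (var2 R n {i, j} * var2 R n (J.erase j))

/-- The Plücker ideal `Plu(n,R)`, generated by all Plücker polynomials. -/
noncomputable def pluIdeal (R : Type*) [CommRing R] (n : ℕ) :
    Ideal (MvPolynomial (V n) R) :=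
  Ideal.span {p | ∃ (i : Fin n) (J : Finset (Fin n)), i ∉ J ∧ J.card = 3 ∧
    p = pluckerPoly R n i J}

/-- `sign(I,J)`: the sign of the permutation sorting the concatenation of the increasing
lists of `I` and of `J` into increasing order, computed as `(−1)^(number of inversions)`. -/
def signIJ {n : ℕ} (I J : Finset (Fin n)) : ℤ :=
  (-1) ^ (((I ×ˢ J).filter (fun p => p.2 < p.1)).card)

/-- The smaller element of a 2-element subset. -/
def lo {n : ℕ} (I : V n) : Fin n :=
  I.1.min' (Finset.card_pos.mp (by rw [I.2]; norm_num))

/-- The larger element of a 2-element subset. -/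
def hi {n : ℕ} (I : V n) : Fin n :=
  I.1.max' (Finset.card_pos.mp (by rw [I.2]; norm_num))

/-- The exterior square (Cauchy–Binet) of a matrix: the `N×N` matrix, indexed by
2-element subsets, whose entry at `({i₁<i₂},{j₁<j₂})` is
`x_{i₁j₁}x_{i₂j₂} − x_{i₁j₂}x_{i₂j₁}`. -/
def wedge {R : Type*} [CommRing R] {n : ℕ} (x : Matrix (Fin n) (Fin n) R) :
    Matrix (V n) (V n) R :=
  fun I J => x (lo I) (lo J) * x (hi I) (hi J) - x (lo I) (hi J) * x (hi I) (lo J)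

/-- The elementary transvection `t_{S,T}(ξ) = e + ξ·e_{S,T}` of `GL_N(R)`, for distinct
2-element subsets `S, T` (interpreted as the identity in the degenerate cases, which
never occur below). -/
def transvN (R : Type*) [CommRing R] (n : ℕ) (S T : Finset (Fin n)) (ξ : R) :
    Matrix (V n) (V n) R :=
  if h : S.card = 2 ∧ T.card = 2 ∧ S ≠ T then
    1 + Matrix.single ⟨S, h.1⟩ ⟨T, h.2.1⟩ ξ
  else 1

/-- The exterior number `a_{A,C}^H(g) = Σ_{(B,D)} sign(B,D)·g_{A,B}·g_{C,D}`, the sum over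
all ordered pairs `(B,D)` of disjoint 2-element subsets with `B ∪ D = H`. -/
def extNum {R : Type*} [CommRing R] {n : ℕ} (g : Matrix (V n) (V n) R)
    (H : Finset (Fin n)) (A C : V n) : R :=
  ∑ B : V n, ∑ D : V n,
    if B.1 ∩ D.1 = ∅ ∧ B.1 ∪ D.1 = H then (signIJ B.1 D.1 : R) * (g A B * g C D) else 0

/-- The 4×4 minor `M_I^J(x)` with rows `I` and columns `J` (both 4-element sets). -/
noncomputable def minor4 {R : Type*} [CommRing R] {n : ℕ}
    (x : Matrix (Fin n) (Fin n) R) (I J : Finset (Fin n)) : R :=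
  if h : I.card = 4 ∧ J.card = 4 then
    Matrix.det (Matrix.of fun a b : Fin 4 =>
      x ↑(I.orderIsoOfFin h.1 a) ↑(J.orderIsoOfFin h.2 b))
  else 0

/-- The elementary group `E(n,R)`: the subgroup of `GL_n(R)` generated by the elementary
transvections `t_{i,j}(ξ) = e + ξ·e_{i,j}`, `i ≠ j`. -/
def elemGroup (R : Type*) [CommRing R] (n : ℕ) :
    Subgroup (Matrix.GeneralLinearGroup (Fin n) R) :=
  Subgroup.closure {x | ∃ (i j : Fin n) (ξ : R), i ≠ j ∧
    (x : Matrix (Fin n) (Fin n) R) = 1 + Matrix.single i j ξ}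

/-- `g` satisfies the exterior-number conditions with witness `θ`. -/
def extCond {R : Type*} [CommRing R] {n : ℕ} (g : Matrix (V n) (V n) R)
    (θ : Finset (Fin n) → Finset (Fin n) → R) : Prop :=
  ∀ H : Finset (Fin n), H.card = 4 → ∀ A C : V n,
    (¬ Disjoint A.1 C.1 → extNum g H A C = 0) ∧
    (Disjoint A.1 C.1 → extNum g H A C = (signIJ A.1 C.1 : R) * θ (A.1 ∪ C.1) H)

/-- The symmetric matrix `B_𝓘` with `(B_𝓘)_{M,L} = sign(M,L)` if `M ⊔ L = 𝓘`
and `0` otherwise. -/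
def bMat (R : Type*) [CommRing R] (n : ℕ) (𝓘 : Finset (Fin n)) :
    Matrix (V n) (V n) R :=
  fun M L => if M.1 ∩ L.1 = ∅ ∧ M.1 ∪ L.1 = 𝓘 then (signIJ M.1 L.1 : R) else 0


section StmtThirteenAux

variable {R : Type*} [CommRing R] {n : ℕ}

private lemma sum4_comm {β : Type*} [AddCommMonoid β] {α : Type*} [Fintype α]
    (f : α → α → α → α → β) :
    ∑ B : α, ∑ D : α, ∑ M : α, ∑ L : α, f B D M L
      = ∑ M : α, ∑ L : α, ∑ B : α, ∑ D : α, f B D M L :=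
  calc ∑ B : α, ∑ D : α, ∑ M : α, ∑ L : α, f B D M L
      = ∑ B : α, ∑ M : α, ∑ D : α, ∑ L : α, f B D M L :=
        Finset.sum_congr rfl fun B _ => Finset.sum_comm
    _ = ∑ M : α, ∑ B : α, ∑ D : α, ∑ L : α, f B D M L := Finset.sum_comm
    _ = ∑ M : α, ∑ B : α, ∑ L : α, ∑ D : α, f B D M L :=
        Finset.sum_congr rfl fun M _ => Finset.sum_congr rfl fun B _ => Finset.sum_comm
    _ = ∑ M : α, ∑ L : α, ∑ B : α, ∑ D : α, f B D M L :=
        Finset.sum_congr rfl fun M _ => Finset.sum_comm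

private lemma extNum_mul (g h : Matrix (V n) (V n) R)
    (θh : Finset (Fin n) → Finset (Fin n) → R) (hh : extCond h θh)
    (H : Finset (Fin n)) (hH : H.card = 4) (A C : V n) :
    extNum (g * h) H A C =
      ∑ I ∈ Finset.univ.filter (fun I : Finset (Fin n) => I.card = 4),
        θh I H * extNum g I A C := by
  have lhs_eq : extNum (g * h) H A C =
      ∑ M : V n, ∑ L : V n, g A M * g C L * extNum h H M L := by
    have step1 : ∀ B D : V n,
        (if B.1 ∩ D.1 = ∅ ∧ B.1 ∪ D.1 = H then
          (signIJ B.1 D.1 : R) * ((g * h) A B * (g * h) C D) else 0)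
        = ∑ M : V n, ∑ L : V n,
            g A M * g C L *
              (if B.1 ∩ D.1 = ∅ ∧ B.1 ∪ D.1 = H then
                (signIJ B.1 D.1 : R) * (h M B * h L D) else 0) := by
      intro B D
      split_ifs with hc
      · simp only [Matrix.mul_apply]
        rw [Finset.sum_mul_sum, Finset.mul_sum]
        refine Finset.sum_congr rfl fun M _ => ?_
        rw [Finset.mul_sum]
        exact Finset.sum_congr rfl fun L _ => by ring
      · simp
    calc extNum (g * h) H A C
        = ∑ B : V n, ∑ D : V n, ∑ M : V n, ∑ L : V n,
            g A M * g C L *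
              (if B.1 ∩ D.1 = ∅ ∧ B.1 ∪ D.1 = H then
                (signIJ B.1 D.1 : R) * (h M B * h L D) else 0) := by
          refine Finset.sum_congr rfl fun B _ => Finset.sum_congr rfl fun D _ => step1 B D
      _ = ∑ M : V n, ∑ L : V n, ∑ B : V n, ∑ D : V n,
            g A M * g C L *
              (if B.1 ∩ D.1 = ∅ ∧ B.1 ∪ D.1 = H then
                (signIJ B.1 D.1 : R) * (h M B * h L D) else 0) :=
          sum4_comm _
      _ = ∑ M : V n, ∑ L : V n, g A M * g C L * extNum h H M L := by
          refine Finset.sum_congr rfl fun M _ => Finset.sum_congr rfl fun L _ => ?_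
          simp only [extNum, Finset.mul_sum]
  have term_eq : ∀ M L : V n, g A M * g C L * extNum h H M L
      = ∑ I ∈ Finset.univ.filter (fun I : Finset (Fin n) => I.card = 4),
          (if M.1 ∩ L.1 = ∅ ∧ M.1 ∪ L.1 = I then
            θh I H * ((signIJ M.1 L.1 : R) * (g A M * g C L)) else 0) := by
    intro M L
    by_cases hd : Disjoint M.1 L.1
    · have he : M.1 ∩ L.1 = ∅ := Finset.disjoint_iff_inter_eq_empty.mp hd
      have hcard : (M.1 ∪ L.1).card = 4 := by
        rw [Finset.card_union_of_disjoint hd, M.2, L.2]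
      rw [(hh H hH M L).2 hd]
      rw [Finset.sum_eq_single (M.1 ∪ L.1)]
      · rw [if_pos ⟨he, rfl⟩]; ring
      · intro b _ hne
        rw [if_neg]
        rintro ⟨-, hb2⟩
        exact hne hb2.symm
      · intro hnot
        exact absurd (Finset.mem_filter.mpr ⟨Finset.mem_univ (M.1 ∪ L.1), hcard⟩) hnot
    · have he : ¬ M.1 ∩ L.1 = ∅ :=
        fun hhe => hd (Finset.disjoint_iff_inter_eq_empty.mpr hhe)
      rw [(hh H hH M L).1 hd, mul_zero]
      symm
      refine Finset.sum_eq_zero fun I _ => ?_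
      rw [if_neg]
      rintro ⟨h1, -⟩
      exact he h1
  rw [lhs_eq]
  calc ∑ M : V n, ∑ L : V n, g A M * g C L * extNum h H M L
      = ∑ M : V n, ∑ L : V n,
          ∑ I ∈ Finset.univ.filter (fun I : Finset (Fin n) => I.card = 4),
            (if M.1 ∩ L.1 = ∅ ∧ M.1 ∪ L.1 = I then
              θh I H * ((signIJ M.1 L.1 : R) * (g A M * g C L)) else 0) := by
        exact Finset.sum_congr rfl fun M _ => Finset.sum_congr rfl fun L _ => term_eq M L
    _ = ∑ M : V n,
          ∑ I ∈ Finset.univ.filter (fun I : Finset (Fin n) => I.card = 4),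
            ∑ L : V n,
            (if M.1 ∩ L.1 = ∅ ∧ M.1 ∪ L.1 = I then
              θh I H * ((signIJ M.1 L.1 : R) * (g A M * g C L)) else 0) := by
        exact Finset.sum_congr rfl fun M _ => Finset.sum_comm
    _ = ∑ I ∈ Finset.univ.filter (fun I : Finset (Fin n) => I.card = 4),
          ∑ M : V n, ∑ L : V n,
            (if M.1 ∩ L.1 = ∅ ∧ M.1 ∪ L.1 = I then
              θh I H * ((signIJ M.1 L.1 : R) * (g A M * g C L)) else 0) :=
        Finset.sum_comm
    _ = ∑ I ∈ Finset.univ.filter (fun I : Finset (Fin n) => I.card = 4),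
          θh I H * extNum g I A C := by
        refine Finset.sum_congr rfl fun I _ => ?_
        simp only [extNum, Finset.mul_sum, mul_ite, mul_zero]

private lemma natCast_succ_fin {k s : ℕ} (hs : s ≤ k) :
    ((s + 1 : ℕ) : Fin (k + 2)) = Fin.succ ((s : ℕ) : Fin (k + 1)) := by
  apply Fin.ext
  rw [Fin.val_natCast, Fin.val_succ, Fin.val_natCast,
    Nat.mod_eq_of_lt (by omega), Nat.mod_eq_of_lt (by omega)]

end StmtThirteenAux

set_option maxHeartbeats 1000000 in
/-- exterior numbers of a product `x₁·x₂·⋯·x_k` of matrices satisfying the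
exterior-number conditions with witnesses `θ 0, …, θ (k−1)`:
`a_{A,C}^H(x₁⋯x_k) = sign(A,C)·Σ_{I₁,…,I_{k−1} ∈ ∧⁴[n]}
θ_{x_k}(I₁,H)·θ_{x_{k−1}}(I₂,I₁)·⋯·θ_{x₁}(A∪C,I_{k−1})`.
The chains `I₀ = H, I₁, …, I_{k−1}, I_k = A∪C` of 4-element subsets are encoded as
functions `c : Fin (k+1) → Finset (Fin n)` with `c 0 = H` and `c k = A ∪ C`; the term of
the sum is `∏_{t=0}^{k−1} θ_{x_{k−1−t}}(I_{t+1}, I_t)` (with `x`'s numbered from `0`). -/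
theorem stmt13 (R : Type*) [CommRing R] (n : ℕ) (hn : 4 ≤ n) (k : ℕ) (hk : 1 ≤ k)
    (x : ℕ → Matrix (V n) (V n) R) (θ : ℕ → Finset (Fin n) → Finset (Fin n) → R)
    (hx : ∀ a < k, extCond (x a) (θ a)) :
    ∀ H : Finset (Fin n), H.card = 4 → ∀ A C : V n, Disjoint A.1 C.1 →
      extNum (((List.range k).map x).prod) H A C =
        (signIJ A.1 C.1 : R) *
          ∑ c ∈ Finset.univ.filter (fun c : Fin (k + 1) → Finset (Fin n) =>
              c 0 = H ∧ c (Fin.last k) = A.1 ∪ C.1 ∧ ∀ m, (c m).card = 4),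
            ∏ t ∈ Finset.range k, θ (k - 1 - t) (c ↑(t + 1)) (c ↑t) := by
  revert hx
  induction k, hk using Nat.le_induction with
  | base =>
    intro hx H hH A C hAC
    have h0 : extCond (x 0) (θ 0) := hx 0 (by norm_num)
    have hprod : ((List.range 1).map x).prod = x 0 := by
      simp [List.range_succ]
    rw [hprod, (h0 H hH A C).2 hAC]
    congr 1
    have hcardAC : (A.1 ∪ C.1).card = 4 := by
      rw [Finset.card_union_of_disjoint hAC, A.2, C.2]
    have hfilter : Finset.univ.filter (fun c : Fin 2 → Finset (Fin n) =>
        c 0 = H ∧ c (Fin.last 1) = A.1 ∪ C.1 ∧ ∀ m, (c m).card = 4)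
        = {fun i : Fin 2 => if i = 0 then H else A.1 ∪ C.1} := by
      ext c
      simp only [Finset.mem_filter, Finset.mem_univ, true_and, Finset.mem_singleton]
      constructor
      · rintro ⟨h1, h2, h3⟩
        funext i
        fin_cases i
        · simpa using h1
        · simpa using h2
      · rintro rfl
        refine ⟨by simp, by simp [Fin.last], fun m => ?_⟩
        by_cases hm : m = 0 <;> simp [hm, hH, hcardAC]
    rw [hfilter, Finset.sum_singleton]
    norm_num
  | succ k hk1 ih =>
    intro hx H hH A C hAC
    have hxk : extCond (x k) (θ k) := hx k (Nat.lt_succ_self k)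
    have hx' : ∀ a < k, extCond (x a) (θ a) := fun a ha => hx a (ha.trans (Nat.lt_succ_self k))
    have hprod : ((List.range (k+1)).map x).prod = ((List.range k).map x).prod * x k := by
      rw [List.range_succ]; simp
    rw [hprod, extNum_mul _ _ _ hxk H hH A C]
    have hcardAC : (A.1 ∪ C.1).card = 4 := by
      rw [Finset.card_union_of_disjoint hAC, A.2, C.2]
    set S : R := (signIJ A.1 C.1 : R) with hS
    set P := ((List.range k).map x).prod with hP
    set F4 := Finset.univ.filter (fun I : Finset (Fin n) => I.card = 4) with hF4
    set Cset : Finset (Fin n) → Finset (Fin (k + 1) → Finset (Fin n)) :=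
      fun I => Finset.univ.filter (fun c : Fin (k + 1) → Finset (Fin n) =>
        c 0 = I ∧ c (Fin.last k) = A.1 ∪ C.1 ∧ ∀ m, (c m).card = 4) with hCset
    calc ∑ I ∈ F4, θ k I H * extNum P I A C
        = ∑ I ∈ F4, ∑ c ∈ Cset I,
            S * (θ k I H * ∏ t ∈ Finset.range k, θ (k - 1 - t) (c ↑(t + 1)) (c ↑t)) := by
          refine Finset.sum_congr rfl fun I hI => ?_
          rw [ih hx' I ((Finset.mem_filter.mp hI).2) A C hAC, Finset.mul_sum, Finset.mul_sum]
          exact Finset.sum_congr rfl fun c _ => by ring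
      _ = ∑ p ∈ F4.sigma Cset,
            S * (θ k p.1 H * ∏ t ∈ Finset.range k, θ (k - 1 - t) (p.2 ↑(t + 1)) (p.2 ↑t)) := by
          rw [Finset.sum_sigma]
      _ = ∑ c ∈ Finset.univ.filter (fun c : Fin (k + 1 + 1) → Finset (Fin n) =>
              c 0 = H ∧ c (Fin.last (k + 1)) = A.1 ∪ C.1 ∧ ∀ m, (c m).card = 4),
            S * ∏ t ∈ Finset.range (k + 1), θ (k + 1 - 1 - t) (c ↑(t + 1)) (c ↑t) := by
          refine Finset.sum_bij'
            (fun p _ => fun m : Fin (k + 1 + 1) =>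
              Fin.cases (motive := fun _ => Finset (Fin n)) H p.2 m)
            (fun c _ => ⟨c 1, fun m : Fin (k + 1) => c m.succ⟩) ?_ ?_ ?_ ?_ ?_
          · rintro ⟨I, c⟩ hp
            obtain ⟨hIm, hcm⟩ := Finset.mem_sigma.mp hp
            obtain ⟨-, hc0, hclast, hcard⟩ := Finset.mem_filter.mp hcm
            refine Finset.mem_filter.mpr ⟨Finset.mem_univ _, ?_, ?_, ?_⟩
            · simp only [Fin.cases_zero]
            · rw [← Fin.succ_last]
              simp only [Fin.cases_succ]
              exact hclast
            · intro m
              induction m using Fin.cases with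
              | zero => simp only [Fin.cases_zero]; exact hH
              | succ i => simp only [Fin.cases_succ]; exact hcard i
          · intro c hc
            obtain ⟨-, hc0, hclast, hcard⟩ := Finset.mem_filter.mp hc
            refine Finset.mem_sigma.mpr ⟨Finset.mem_filter.mpr ⟨Finset.mem_univ _, hcard 1⟩, ?_⟩
            refine Finset.mem_filter.mpr ⟨Finset.mem_univ _, ?_, ?_, fun m => hcard m.succ⟩
            · show c (Fin.succ 0) = c 1
              rw [Fin.succ_zero_eq_one]
            · show c (Fin.succ (Fin.last k)) = A.1 ∪ C.1
              rw [Fin.succ_last]; exact hclast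
          · rintro ⟨I, c⟩ hp
            obtain ⟨hIm, hcm⟩ := Finset.mem_sigma.mp hp
            obtain ⟨-, hc0, hclast, hcard⟩ := Finset.mem_filter.mp hcm
            have hc0' : c 0 = I := hc0
            have e1 : (Fin.cases (motive := fun _ => Finset (Fin n)) H c
                (1 : Fin (k + 1 + 1))) = I := by
              rw [← Fin.succ_zero_eq_one]
              simp only [Fin.cases_succ]
              exact hc0'
            have e2 : (fun m : Fin (k + 1) =>
                Fin.cases (motive := fun _ => Finset (Fin n)) H c m.succ) = c :=
              funext fun m => Fin.cases_succ m
            show (⟨Fin.cases (motive := fun _ => Finset (Fin n)) H c (1 : Fin (k + 1 + 1)),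
                fun m : Fin (k + 1) => Fin.cases (motive := fun _ => Finset (Fin n)) H c m.succ⟩
                : (_ : Finset (Fin n)) × (Fin (k + 1) → Finset (Fin n)))
              = ⟨I, c⟩
            rw [e1, e2]
          · intro c hc
            obtain ⟨-, hc0, hclast, hcard⟩ := Finset.mem_filter.mp hc
            simp only []
            funext m
            induction m using Fin.cases with
            | zero => simp only [Fin.cases_zero]; exact hc0.symm
            | succ i => simp only [Fin.cases_succ]
          · rintro ⟨I, c⟩ hp
            obtain ⟨hIm, hcm⟩ := Finset.mem_sigma.mp hp
            obtain ⟨-, hc0, hclast, hcard⟩ := Finset.mem_filter.mp hcm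
            have hc0' : c 0 = I := hc0
            show S * (θ k I H * ∏ t ∈ Finset.range k, θ (k - 1 - t) (c ↑(t + 1)) (c ↑t))
              = S * ∏ t ∈ Finset.range (k + 1), θ (k + 1 - 1 - t)
                  (Fin.cases (motive := fun _ => Finset (Fin n)) H c ((t + 1 : ℕ) : Fin (k + 1 + 1)))
                  (Fin.cases (motive := fun _ => Finset (Fin n)) H c ((t : ℕ) : Fin (k + 1 + 1)))
            have hrw : ∀ s : ℕ, s ≤ k →
                (Fin.cases (motive := fun _ => Finset (Fin n)) H c
                  ((s + 1 : ℕ) : Fin (k + 1 + 1))) = c ((s : ℕ) : Fin (k + 1)) := by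
              intro s hs
              rw [natCast_succ_fin hs, Fin.cases_succ]
            rw [Finset.prod_range_succ']
            have hz : ((0 : ℕ) : Fin (k + 1 + 1)) = 0 := by
              apply Fin.ext; simp
            have t0 : θ (k + 1 - 1 - 0)
                (Fin.cases (motive := fun _ => Finset (Fin n)) H c ((0 + 1 : ℕ) : Fin (k + 1 + 1)))
                (Fin.cases (motive := fun _ => Finset (Fin n)) H c ((0 : ℕ) : Fin (k + 1 + 1)))
                = θ k I H := by
              rw [hrw 0 (Nat.zero_le k), hz]
              simp only [Fin.cases_zero]
              norm_num
              rw [hc0']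
            rw [t0]
            have trest : ∀ t ∈ Finset.range k,
                θ (k + 1 - 1 - (t + 1))
                  (Fin.cases (motive := fun _ => Finset (Fin n)) H c ((t + 1 + 1 : ℕ) : Fin (k + 1 + 1)))
                  (Fin.cases (motive := fun _ => Finset (Fin n)) H c ((t + 1 : ℕ) : Fin (k + 1 + 1)))
                = θ (k - 1 - t) (c ((t + 1 : ℕ) : Fin (k + 1))) (c ((t : ℕ) : Fin (k + 1))) := by
              intro t ht
              have ht' : t < k := Finset.mem_range.mp ht
              rw [hrw (t + 1) (by omega), hrw t (by omega)]
              congr 1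
              omega
            rw [Finset.prod_congr rfl trest]
            ring
      _ = S * ∑ c ∈ Finset.univ.filter (fun c : Fin (k + 1 + 1) → Finset (Fin n) =>
              c 0 = H ∧ c (Fin.last (k + 1)) = A.1 ∪ C.1 ∧ ∀ m, (c m).card = 4),
            ∏ t ∈ Finset.range (k + 1), θ (k + 1 - 1 - t) (c ↑(t + 1)) (c ↑t) := by
          rw [Finset.mul_sum]
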